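/- Let p ≡ 1 (mod 4) be a prime and s the Legendre sequence of period p. Then gcd(P_s(2), 2^p - 1) = 1; that is, the 2-adic complexity of s equals p. -/

import Mathlib

private lemma sum_zmod_transfer {p : ℕ} [NeZero p] {M : Type*} [AddCommMonoid M]
    (F : ZMod p → M) : ∑ i : ZMod p, F i = ∑ i ∈ Finset.range p, F (i : ZMod p) := by
  refine Finset.sum_bij' (fun a _ => a.val) (fun b _ => (b : ZMod p)) ?_ ?_ ?_ ?_ ?_
  · intro a _; exact Finset.mem_range.mpr (ZMod.val_lt a)
  · intro b _; exact Finset.mem_univ _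
  · intro a _; exact ZMod.natCast_rightInverse a
  · intro b hb; exact ZMod.val_cast_of_lt (Finset.mem_range.mp hb)
  · intro a _; rw [ZMod.natCast_rightInverse a]

theorem stmt12 (p : ℕ) (hp : p.Prime) (hp4 : p % 4 = 1) [NeZero p]
    (s : ZMod p → ℤ) (hbin : ∀ i, s i = 0 ∨ s i = 1)
    (hs : ∀ i : ZMod p, s i = 1 ↔ i ≠ 0 ∧ IsSquare i) :
    Int.gcd (∑ i ∈ Finset.range p, s (i : ZMod p) * 2 ^ i) (2 ^ p - 1) = 1 := by
  haveI : Fact p.Prime := ⟨hp⟩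
  by_contra hg
  set S : ℤ := ∑ i ∈ Finset.range p, s (i : ZMod p) * 2 ^ i with hSdef
  obtain ⟨q, hq, hqdvd⟩ := Nat.exists_prime_and_dvd hg
  haveI : Fact q.Prime := ⟨hq⟩
  have hqS : (q : ℤ) ∣ S := dvd_trans (Int.natCast_dvd_natCast.mpr hqdvd) (Int.gcd_dvd_left _ _)
  have hqN : (q : ℤ) ∣ 2 ^ p - 1 := dvd_trans (Int.natCast_dvd_natCast.mpr hqdvd) (Int.gcd_dvd_right _ _)
  have hp2 : 2 ≤ p := hp.two_le
  -- q is odd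
  have hq2 : q ≠ 2 := by
    rintro rfl
    have hdp : (2 : ℤ) ∣ 2 ^ p := dvd_pow_self 2 (by omega)
    have : (2 : ℤ) ∣ 1 := by
      have := dvd_sub hdp (by exact_mod_cast hqN : (2:ℤ) ∣ 2 ^ p - 1)
      simpa using this
    norm_num at this
  -- 2^p = 1 in ZMod q
  have h2p : (2 : ZMod q) ^ p = 1 := by
    have := (ZMod.intCast_zmod_eq_zero_iff_dvd (2 ^ p - 1) q).mpr hqN
    push_cast at this
    linear_combination this
  have h21 : (2 : ZMod q) ≠ 1 := by
    intro h
    have : ((1 : ℕ) : ZMod q) = 0 := by push_cast; linear_combination h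
    have := (ZMod.natCast_eq_zero_iff 1 q).mp this
    exact hq.one_lt.ne' (Nat.dvd_one.mp this)
  have hord : orderOf (2 : ZMod q) = p := orderOf_eq_prime h2p h21
  have hprim : IsPrimitiveRoot (2 : ZMod q) p := hord ▸ IsPrimitiveRoot.orderOf (2 : ZMod q)
  -- p < q
  have hpq : p < q := by
    have h2ne : (2 : ZMod q) ≠ 0 := by
      intro h
      have := (ZMod.natCast_eq_zero_iff 2 q).mp (by exact_mod_cast h)
      exact hq2 ((Nat.prime_dvd_prime_iff_eq hq Nat.prime_two).mp this)
    have hdvd : p ∣ q - 1 := by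
      rw [← hord]
      exact orderOf_dvd_of_pow_eq_one (ZMod.pow_card_sub_one_eq_one h2ne)
    have hq1 : 0 < q - 1 := by have := hq.two_le; omega
    have := Nat.le_of_dvd hq1 hdvd
    omega
  -- additive character
  set ψ : AddChar (ZMod p) (ZMod q) := AddChar.zmodChar p h2p with hψdef
  have hψprim : ψ.IsPrimitive := AddChar.zmodChar_primitive_of_primitive_root p hprim
  -- multiplicative character
  set χ : MulChar (ZMod p) (ZMod q) :=
    (quadraticChar (ZMod p)).ringHomComp (Int.castRingHom (ZMod q)) with hχdef
  have hχquad : χ.IsQuadratic := (quadraticChar_isQuadratic (ZMod p)).comp _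
  have hqodd : ((-1 : ℤ) : ZMod q) ≠ 1 := by
    intro h
    have : ((2 : ℕ) : ZMod q) = 0 := by push_cast; linear_combination -h
    have := (ZMod.natCast_eq_zero_iff 2 q).mp this
    exact hq2 ((Nat.prime_dvd_prime_iff_eq hq Nat.prime_two).mp this)
  have hpodd : ringChar (ZMod p) ≠ 2 := by
    rw [ZMod.ringChar_zmod_n]; omega
  have hχne : χ ≠ 1 := by
    intro h
    obtain ⟨b, hb⟩ := FiniteField.exists_nonsquare hpodd
    have hb0 : b ≠ 0 := by rintro rfl; exact hb (IsSquare.zero)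
    have h1 : χ b = 1 := by rw [h]; exact MulChar.one_apply (Ne.isUnit hb0)
    have h2 : χ b = ((-1 : ℤ) : ZMod q) := by
      rw [hχdef]
      simp only [MulChar.ringHomComp_apply, quadraticChar_neg_one_iff_not_isSquare.mpr hb]
      simp
    exact hqodd (h2 ▸ h1)
  -- value of χ at -1
  have hχneg1 : χ (-1) = 1 := by
    have hsq : IsSquare (-1 : ZMod p) := ZMod.exists_sq_eq_neg_one_iff.mpr (by omega)
    have hne : (-1 : ZMod p) ≠ 0 := by
      intro h
      have : (1 : ZMod p) = 0 := by linear_combination -h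
      exact one_ne_zero this
    rw [hχdef]
    simp only [MulChar.ringHomComp_apply, (quadraticChar_one_iff_isSquare hne).mpr hsq]
    simp
  -- Gauss sum squared
  have hgsq : gaussSum χ ψ ^ 2 = (p : ZMod q) := by
    rw [gaussSum_sq hχne hχquad hψprim, hχneg1, one_mul, ZMod.card]
  -- S ≡ 0 mod q
  have hS0 : ((S : ℤ) : ZMod q) = 0 := (ZMod.intCast_zmod_eq_zero_iff_dvd S q).mpr hqS
  -- sum of ψ over ZMod p is 0
  have hψsum : ∑ i : ZMod p, ψ i = 0 := by
    rw [sum_zmod_transfer]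
    have : ∀ i ∈ Finset.range p, ψ ((i : ℕ) : ZMod p) = (2 : ZMod q) ^ i := by
      intro i _
      rw [hψdef, AddChar.zmodChar_apply']
    rw [Finset.sum_congr rfl this]
    have := geom_sum_mul (2 : ZMod q) p
    have h1 : (2 : ZMod q) - 1 = 1 := by ring
    rw [h1, mul_one, h2p, sub_self] at this
    exact this
  -- pointwise identity for χ
  have hχpt : ∀ i : ZMod p, χ i = 2 * ((s i : ℤ) : ZMod q) - 1 + (if i = 0 then 1 else 0) := by
    intro i
    by_cases hi : i = 0
    · subst hi
      have hs0 : s 0 = 0 := by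
        rcases hbin 0 with h | h
        · exact h
        · exact absurd ((hs 0).mp h).1 (by simp)
      rw [hχdef]
      simp [hs0, MulChar.map_zero]
    · by_cases hsq : IsSquare i
      · have : s i = 1 := (hs i).mpr ⟨hi, hsq⟩
        rw [hχdef]
        simp only [MulChar.ringHomComp_apply, (quadraticChar_one_iff_isSquare hi).mpr hsq]
        rw [this]
        simp only [hi, if_false, map_one, map_neg]
        push_cast
        ring
      · have : s i = 0 := by
          rcases hbin i with h | h
          · exact h
          · exact absurd ((hs i).mp h).2 hsq
        rw [hχdef]
        simp only [MulChar.ringHomComp_apply, quadraticChar_neg_one_iff_not_isSquare.mpr hsq]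
        rw [this]
        simp only [hi, if_false, map_one, map_neg]
        push_cast
        ring
  -- compute Gauss sum = 2*S + 1 = 1 mod q
  have hgval : gaussSum χ ψ = 1 := by
    unfold gaussSum
    rw [Finset.sum_congr rfl (fun i _ => by rw [hχpt i])]
    have expand : ∑ i : ZMod p, (2 * ((s i : ℤ) : ZMod q) - 1 + (if i = 0 then 1 else 0)) * ψ i
        = 2 * (∑ i : ZMod p, ((s i : ℤ) : ZMod q) * ψ i) - (∑ i : ZMod p, ψ i)
          + (∑ i : ZMod p, (if i = 0 then 1 else 0) * ψ i) := by
      rw [Finset.mul_sum, ← Finset.sum_sub_distrib, ← Finset.sum_add_distrib]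
      exact Finset.sum_congr rfl (fun i _ => by ring)
    rw [expand, hψsum]
    have hdelta : (∑ i : ZMod p, (if i = 0 then 1 else 0) * ψ i) = 1 := by
      rw [Finset.sum_eq_single (0 : ZMod p)]
      · simp [AddChar.map_zero_eq_one]
      · intro b _ hb; simp [hb]
      · intro h; exact absurd (Finset.mem_univ _) h
    rw [hdelta]
    have hmain : (∑ i : ZMod p, ((s i : ℤ) : ZMod q) * ψ i) = 0 := by
      rw [sum_zmod_transfer (fun i => ((s i : ℤ) : ZMod q) * ψ i)]
      have : ∀ i ∈ Finset.range p, ((s (i : ZMod p) : ℤ) : ZMod q) * ψ ((i : ℕ) : ZMod p)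
          = ((s (i : ZMod p) * 2 ^ i : ℤ) : ZMod q) := by
        intro i _
        rw [hψdef, AddChar.zmodChar_apply']
        push_cast
        ring
      rw [Finset.sum_congr rfl this, ← Int.cast_sum]
      rw [← hSdef] at *
      exact hS0
    rw [hmain]
    ring
  rw [hgval, one_pow] at hgsq
  -- q ∣ p - 1, contradiction with p < q
  have : ((p - 1 : ℕ) : ZMod q) = 0 := by
    push_cast [Nat.cast_sub (by omega : 1 ≤ p)]
    linear_combination -hgsq
  have hdvd : q ∣ p - 1 := (ZMod.natCast_eq_zero_iff _ q).mp this
  have := Nat.le_of_dvd (by omega) hdvd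
  omega
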